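/- Let 0 < x ≤ 1/2, t ≥ 0, n ≥ 1. With Xⁿ_t the countdown Markov chain value and X_t its n → ∞ limit, d_TV(X_t, Xⁿ_t) = (∏_{i=t+1}^{n+t} (1−xⁱ)) · (1 − ∏_{i=n+t+1}^∞ (1−xⁱ)) = P(Xⁿ_t = 0) − P(X_t = 0). -/

import Mathlib

open MeasureTheory ProbabilityTheory

/-- The countdown process driven by delays `Z 1, ..., Z n`, started at height `n`
at time `-n`. -/
noncomputable def countdown {Ω : Type*} (Z : ℕ → Ω → ℕ) (n : ℕ) (t : ℤ) (ω : Ω) : ℕ :=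
  sInf {k : ℕ | ((∑ i ∈ Finset.Icc (k + 1) n, Z i ω : ℕ) : ℤ) ≤ t + k}



/-- partial q-Pochhammer product ∏_{i=1}^m (1 - x^i) -/
noncomputable def DP (x : ℝ) (m : ℕ) : ℝ := ∏ i ∈ Finset.Icc 1 m, (1 - x ^ i)

/-- Gaussian binomial as ratio of products. -/
noncomputable def qbin (x : ℝ) (a b : ℕ) : ℝ :=
  if b ≤ a then DP x a / (DP x b * DP x (a - b)) else 0

lemma one_sub_pow_pos {x : ℝ} (hx0 : 0 < x) (hx1 : x < 1) (i : ℕ) (hi : 1 ≤ i) :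
    0 < 1 - x ^ i := by
  have h1 : x ^ i < 1 := pow_lt_one₀ hx0.le hx1 (by omega)
  linarith

section Algebra
variable {x : ℝ} (hx0 : 0 < x) (hx1 : x < 1)
include hx0 hx1

lemma DP_pos (m : ℕ) : 0 < DP x m := by
  apply Finset.prod_pos
  intro i hi
  exact one_sub_pow_pos hx0 hx1 i (Finset.mem_Icc.mp hi).1

lemma DP_ne (m : ℕ) : DP x m ≠ 0 := (DP_pos hx0 hx1 m).ne'

omit hx0 hx1 in
lemma DP_succ (m : ℕ) : DP x (m + 1) = DP x m * (1 - x ^ (m + 1)) :=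
  Finset.prod_Icc_succ_top (by omega) _

omit hx1 in
lemma qbin_nonneg (hx1 : x ≤ 1) (a b : ℕ) : 0 ≤ qbin x a b := by
  unfold qbin
  split
  · have hDP : ∀ m : ℕ, 0 ≤ DP x m := fun m => Finset.prod_nonneg fun i hi => by
      have : x ^ i ≤ 1 := pow_le_one₀ hx0.le hx1
      linarith
    exact div_nonneg (hDP _) (mul_nonneg (hDP _) (hDP _))
  · exact le_rfl

omit hx0 hx1 in
lemma qbin_of_le {a b : ℕ} (h : b ≤ a) :
    qbin x a b = DP x a / (DP x b * DP x (a - b)) := if_pos h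

omit hx0 hx1 in
lemma qbin_of_lt {a b : ℕ} (h : a < b) : qbin x a b = 0 := if_neg (by omega)

lemma qbin_self (a : ℕ) : qbin x a a = 1 := by
  rw [qbin_of_le le_rfl, Nat.sub_self]
  have : DP x 0 = 1 := by simp [DP]
  rw [this, mul_one, div_self (DP_ne hx0 hx1 a)]

lemma qbin_zero (a : ℕ) : qbin x a 0 = 1 := by
  rw [qbin_of_le (Nat.zero_le a), Nat.sub_zero]
  have : DP x 0 = 1 := by simp [DP]
  rw [this, one_mul, div_self (DP_ne hx0 hx1 a)]

lemma qbin_pascal {a b : ℕ} (h : b ≤ a) :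
    qbin x (a + 1) (b + 1) = qbin x a b + x ^ (b + 1) * qbin x a (b + 1) := by
  rcases eq_or_lt_of_le h with rfl | hlt
  · rw [qbin_self hx0 hx1, qbin_self hx0 hx1, qbin_of_lt (Nat.lt_succ_self b)]
    ring
  · have hb1 : b + 1 ≤ a := hlt
    rw [qbin_of_le (by omega : b + 1 ≤ a + 1), qbin_of_le h, qbin_of_le hb1]
    have h1 : a + 1 - (b + 1) = a - b := by omega
    have h2 : a - b = (a - (b + 1)) + 1 := by omega
    rw [h1, DP_succ a, h2, DP_succ (a - (b+1)), DP_succ b, ← h2]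
    have hne1 := DP_ne hx0 hx1 a
    have hne2 := DP_ne hx0 hx1 b
    have hne4 := DP_ne hx0 hx1 (a - (b + 1))
    have hne5 : (1 - x ^ (b + 1)) ≠ 0 := (one_sub_pow_pos hx0 hx1 _ (by omega)).ne'
    have hne6 : (1 - x ^ (a - b)) ≠ 0 := (one_sub_pow_pos hx0 hx1 _ (by omega)).ne'
    have hkey : x ^ (b + 1) * x ^ (a - b) = x ^ (a + 1) := by
      rw [← pow_add]; congr 1; omega
    have hsub : (1 : ℝ) - x ^ (a + 1)
        = (1 - x ^ (b + 1)) + x ^ (b + 1) * (1 - x ^ (a - b)) := by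
      rw [← hkey]; ring
    rw [hsub]
    field_simp

lemma qbin_hockey (r m : ℕ) :
    ∑ i ∈ Finset.range (m + 1), x ^ i * qbin x (i + r - 1) i = qbin x (m + r) m := by
  rcases Nat.eq_zero_or_pos r with rfl | hr
  · rw [Finset.sum_eq_single 0]
    · simp [qbin_zero hx0 hx1, qbin_self hx0 hx1]
    · intro i _ hi
      have : i + 0 - 1 < i := by omega
      rw [qbin_of_lt this, mul_zero]
    · intro h; exact absurd (Finset.mem_range.mpr (by omega)) h
  · obtain ⟨s, rfl⟩ : ∃ s, r = s + 1 := ⟨r - 1, by omega⟩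
    induction m with
    | zero => simp [qbin_zero hx0 hx1]
    | succ m ih =>
        rw [Finset.sum_range_succ, ih]
        have e1 : m + 1 + (s + 1) - 1 = m + s + 1 := by omega
        have e2 : m + (s + 1) = m + s + 1 := by omega
        have e3 : m + 1 + (s + 1) = (m + s + 1) + 1 := by omega
        rw [e1, e2, e3]
        conv_rhs => rw [qbin_pascal hx0 hx1 (by omega : m ≤ m + s + 1)]

end Algebra

section Tprod
variable {x : ℝ} (hx0 : 0 < x) (hx1 : x < 1)

include hx0 hx1

lemma geom_factor_nonneg (c : ℕ) (i : ℕ) : 0 ≤ 1 - x ^ (c + i) := by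
  have : x ^ (c + i) ≤ 1 := pow_le_one₀ hx0.le hx1.le
  linarith

lemma geom_factor_le_one (c : ℕ) (i : ℕ) : 1 - x ^ (c + i) ≤ 1 := by
  have : 0 ≤ x ^ (c + i) := by positivity
  linarith

lemma multipliable_geom (c : ℕ) : Multipliable (fun i : ℕ => 1 - x ^ (c + i)) := by
  set f : ℕ → ℝ := fun i => 1 - x ^ (c + i) with hf
  have hanti : Antitone (fun s : Finset ℕ => ∏ i ∈ s, f i) := by
    intro s t hst
    have h1 : (∏ i ∈ t \ s, f i) * ∏ i ∈ s, f i = ∏ i ∈ t, f i :=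
      Finset.prod_sdiff hst
    have h2 : (∏ i ∈ t \ s, f i) ≤ 1 :=
      Finset.prod_le_one (fun i _ => geom_factor_nonneg hx0 hx1 c i)
        (fun i _ => geom_factor_le_one hx0 hx1 c i)
    have h3 : 0 ≤ ∏ i ∈ s, f i :=
      Finset.prod_nonneg fun i _ => geom_factor_nonneg hx0 hx1 c i
    calc (∏ i ∈ t, f i) = (∏ i ∈ t \ s, f i) * ∏ i ∈ s, f i := h1.symm
      _ ≤ 1 * ∏ i ∈ s, f i := mul_le_mul_of_nonneg_right h2 h3
      _ = ∏ i ∈ s, f i := one_mul _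
  have hbdd : BddBelow (Set.range fun s : Finset ℕ => ∏ i ∈ s, f i) := by
    refine ⟨0, ?_⟩
    rintro y ⟨s, rfl⟩
    exact Finset.prod_nonneg fun i _ => geom_factor_nonneg hx0 hx1 c i
  exact ⟨_, tendsto_atTop_ciInf hanti hbdd⟩

lemma tprod_geom_le_one (c : ℕ) : (∏' i : ℕ, (1 - x ^ (c + i))) ≤ 1 := by
  refine le_of_tendsto' (multipliable_geom hx0 hx1 c).hasProd ?_
  intro s
  exact Finset.prod_le_one (fun i _ => geom_factor_nonneg hx0 hx1 c i)
    (fun i _ => geom_factor_le_one hx0 hx1 c i)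

lemma tprod_geom_nonneg (c : ℕ) : 0 ≤ ∏' i : ℕ, (1 - x ^ (c + i)) := by
  refine ge_of_tendsto' (multipliable_geom hx0 hx1 c).hasProd ?_
  intro s
  exact Finset.prod_nonneg fun i _ => geom_factor_nonneg hx0 hx1 c i

lemma finset_one_sub_sum_le_prod (c : ℕ) (s : Finset ℕ) :
    1 - (∑ i ∈ s, x ^ (c + i)) ≤ ∏ i ∈ s, (1 - x ^ (c + i)) := by
  classical
  induction s using Finset.induction_on with
  | empty => simp
  | @insert a s hnotmem ih =>
      rw [Finset.sum_insert hnotmem, Finset.prod_insert hnotmem]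
      have h1 : 0 ≤ x ^ (c + a) := by positivity
      have h2 : x ^ (c + a) ≤ 1 := pow_le_one₀ hx0.le hx1.le
      have h3 : 0 ≤ ∑ i ∈ s, x ^ (c + i) := Finset.sum_nonneg fun i _ => by positivity
      nlinarith [ih]

lemma tprod_geom_ge (hx2 : x ≤ 1 / 2) (c : ℕ) :
    1 - 2 * x ^ c ≤ ∏' i : ℕ, (1 - x ^ (c + i)) := by
  refine ge_of_tendsto' (multipliable_geom hx0 hx1 c).hasProd ?_
  intro s
  refine le_trans ?_ (finset_one_sub_sum_le_prod hx0 hx1 c s)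
  have hsum : (∑ i ∈ s, x ^ (c + i)) ≤ 2 * x ^ c := by
    have h1 : (∑ i ∈ s, x ^ (c + i)) ≤ ∑' i : ℕ, x ^ (c + i) := by
      refine Summable.sum_le_tsum s (fun i _ => by positivity) ?_
      simpa [pow_add] using
        (summable_geometric_of_lt_one hx0.le hx1).mul_left (x ^ c)
    have h2 : (∑' i : ℕ, x ^ (c + i)) = x ^ c * (1 - x)⁻¹ := by
      simp_rw [pow_add]
      rw [tsum_mul_left, tsum_geometric_of_lt_one hx0.le hx1]
    have h3 : (1 - x)⁻¹ ≤ 2 := by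
      rw [inv_le_comm₀ (by linarith) (by norm_num)]
      linarith
    calc (∑ i ∈ s, x ^ (c + i)) ≤ x ^ c * (1 - x)⁻¹ := h2 ▸ h1
      _ ≤ x ^ c * 2 := by
          have : (0:ℝ) ≤ x ^ c := by positivity
          nlinarith
      _ = 2 * x ^ c := by ring
  linarith

lemma tprod_geom_shift (c N : ℕ) :
    (∏' i : ℕ, (1 - x ^ (c + i)))
      = (∏ i ∈ Finset.range N, (1 - x ^ (c + i))) * ∏' i : ℕ, (1 - x ^ (c + N + i)) := by
  set f : ℕ → ℝ := fun i => 1 - x ^ (c + i) with hf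
  have hfun : (fun n : ℕ => f (n + N)) = fun n : ℕ => 1 - x ^ (c + N + n) := by
    funext n
    simp only [f]
    congr 2
    omega
  have hm : Multipliable fun n : ℕ => f (n + N) := by
    rw [hfun]; exact multipliable_geom hx0 hx1 (c + N)
  have := Multipliable.prod_mul_tprod_nat_mul' (f := f) (k := N) hm
  rw [← this]
  congr 1
  rw [show (fun n : ℕ => f (n + N)) = fun n : ℕ => 1 - x ^ (c + N + n) from hfun]

end Tprod

section Prob
open Finset

variable {Ω : Type*} [MeasurableSpace Ω] {P : Measure Ω} [IsProbabilityMeasure P]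
  {x : ℝ} {Z : ℕ → Ω → ℕ}

lemma P_Z_eq [IsProbabilityMeasure P] (hx0 : 0 < x) (hx1 : x < 1)
    (hmeas : ∀ i, Measurable (Z i))
    (hgeom : ∀ i, 1 ≤ i → ∀ k : ℕ, P {ω | k ≤ Z i ω} = ENNReal.ofReal (x ^ (i * k)))
    (i : ℕ) (hi : 1 ≤ i) (j : ℕ) :
    P (Z i ⁻¹' {j}) = ENNReal.ofReal (x ^ (i * j) * (1 - x ^ i)) := by
  have hU : {ω | j ≤ Z i ω} = (Z i ⁻¹' {j}) ∪ {ω | j + 1 ≤ Z i ω} := by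
    ext ω
    simp only [Set.mem_setOf_eq, Set.mem_union, Set.mem_preimage, Set.mem_singleton_iff]
    omega
  have hdisj : Disjoint (Z i ⁻¹' {j}) {ω | j + 1 ≤ Z i ω} := by
    rw [Set.disjoint_left]
    intro ω h1 h2
    simp only [Set.mem_preimage, Set.mem_singleton_iff] at h1
    simp only [Set.mem_setOf_eq] at h2
    omega
  have hmB : MeasurableSet {ω | j + 1 ≤ Z i ω} := hmeas i measurableSet_Ici
  have hj := hgeom i hi j
  rw [hU, measure_union hdisj hmB, hgeom i hi (j + 1)] at hj
  have h1 : P (Z i ⁻¹' {j}) = ENNReal.ofReal (x ^ (i * j)) - ENNReal.ofReal (x ^ (i * (j + 1))) :=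
    ENNReal.eq_sub_of_add_eq ENNReal.ofReal_ne_top hj
  rw [h1, ← ENNReal.ofReal_sub _ (by positivity)]
  congr 1
  have : i * (j + 1) = i * j + i := by ring
  rw [this, pow_add]
  ring

lemma sumZ_pmf (hx0 : 0 < x) (hx1 : x < 1) (hmeas : ∀ i, Measurable (Z i))
    (hindep : iIndepFun Z P)
    (hgeom : ∀ i, 1 ≤ i → ∀ k : ℕ, P {ω | k ≤ Z i ω} = ENNReal.ofReal (x ^ (i * k)))
    (n : ℕ) : ∀ r, r ≤ n → ∀ m : ℕ,
    P ((fun ω => ∑ i ∈ Finset.Icc (n - r + 1) n, Z i ω) ⁻¹' {m})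
      = ENNReal.ofReal ((∏ i ∈ Finset.Icc (n - r + 1) n, (1 - x ^ i))
          * (x ^ ((n - r + 1) * m) * qbin x (m + r - 1) m)) := by
  intro r
  induction r with
  | zero =>
      intro _ m
      have he : Finset.Icc (n - 0 + 1) n = (∅ : Finset ℕ) := Finset.Icc_eq_empty (by omega)
      rw [he]
      simp only [Finset.sum_empty, Finset.prod_empty, one_mul]
      cases m with
      | zero =>
          have : ((fun _ : Ω => (0:ℕ)) ⁻¹' {0}) = Set.univ := by
            ext ω; simp
          rw [this, measure_univ]
          rw [Nat.mul_zero, pow_zero, qbin_zero hx0 hx1, mul_one, ENNReal.ofReal_one]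
      | succ m =>
          have : ((fun _ : Ω => (0:ℕ)) ⁻¹' {m + 1}) = (∅ : Set Ω) := by
            ext ω; simp
          rw [this, measure_empty]
          rw [qbin_of_lt (by omega : m + 1 + 0 - 1 < m + 1)]
          simp
  | succ r ih =>
      intro hr1 m
      have hrn : r ≤ n := by omega
      have hc : n - (r + 1) + 1 = n - r := by omega
      have hc1 : 1 ≤ n - r := by omega
      have hcn : n - r ≤ n := by omega
      have hIoc : Finset.Icc (n - r + 1) n = Finset.Ioc (n - r) n := Finset.Icc_add_one_left_eq_Ioc _ _
      rw [hc]
      -- split the sum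
      have hsplit : ∀ ω, (∑ i ∈ Finset.Icc (n - r) n, Z i ω)
          = Z (n - r) ω + ∑ i ∈ Finset.Icc (n - r + 1) n, Z i ω := by
        intro ω
        rw [Finset.Icc_eq_cons_Ioc hcn, Finset.sum_cons, hIoc]
      have hev : ((fun ω => ∑ i ∈ Finset.Icc (n - r) n, Z i ω) ⁻¹' {m})
          = ⋃ j ∈ Finset.range (m + 1),
              ((Z (n - r) ⁻¹' {j})
                ∩ ((fun ω => ∑ i ∈ Finset.Icc (n - r + 1) n, Z i ω) ⁻¹' {m - j})) := by
        ext ω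
        simp only [Set.mem_preimage, Set.mem_singleton_iff, Set.mem_iUnion,
          Set.mem_inter_iff, Finset.mem_range, hsplit ω]
        constructor
        · intro h
          exact ⟨Z (n - r) ω, by omega, rfl, by omega⟩
        · rintro ⟨j, hj, h1, h2⟩
          omega
      have hind : IndepFun (Z (n - r)) (fun ω => ∑ i ∈ Finset.Icc (n - r + 1) n, Z i ω) P := by
        have h0 := (hindep.indepFun_finsetSum_of_notMem hmeas
          (s := Finset.Icc (n - r + 1) n) (i := n - r) (by simp)).symm
        have heq : (∑ j ∈ Finset.Icc (n - r + 1) n, Z j)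
            = fun ω => ∑ i ∈ Finset.Icc (n - r + 1) n, Z i ω := by
          funext ω; exact Finset.sum_apply ω _ Z
        rwa [heq] at h0
      have hmS : Measurable (fun ω => ∑ i ∈ Finset.Icc (n - r + 1) n, Z i ω) := by
        apply Finset.measurable_sum
        intro i _
        exact hmeas i
      rw [hev, measure_biUnion_finset ?hd ?hm]
      case hd =>
        intro a ha b hb hab
        simp only [Function.onFun]
        rw [Set.disjoint_left]
        rintro ω ⟨h1, -⟩ ⟨h2, -⟩
        simp only [Set.mem_preimage, Set.mem_singleton_iff] at h1 h2
        exact hab (h1 ▸ h2 ▸ rfl)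
      case hm =>
        intro j _
        exact ((hmeas (n - r)) (measurableSet_singleton j)).inter
          (hmS (measurableSet_singleton (m - j)))
      have hterm : ∀ j ∈ Finset.range (m + 1),
          P ((Z (n - r) ⁻¹' {j})
              ∩ ((fun ω => ∑ i ∈ Finset.Icc (n - r + 1) n, Z i ω) ⁻¹' {m - j}))
            = ENNReal.ofReal ((x ^ ((n - r) * j) * (1 - x ^ (n - r)))
                * ((∏ i ∈ Finset.Icc (n - r + 1) n, (1 - x ^ i))
                  * (x ^ ((n - r + 1) * (m - j)) * qbin x ((m - j) + r - 1) (m - j)))) := by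
        intro j _
        rw [hind.measure_inter_preimage_eq_mul _ _ (measurableSet_singleton j)
          (measurableSet_singleton (m - j))]
        rw [P_Z_eq hx0 hx1 hmeas hgeom (n - r) hc1 j, ih hrn (m - j),
          ← ENNReal.ofReal_mul (mul_nonneg (by positivity) (one_sub_pow_pos hx0 hx1 _ hc1).le)]
      rw [Finset.sum_congr rfl hterm]
      rw [← ENNReal.ofReal_sum_of_nonneg ?hnn]
      case hnn =>
        intro j _
        have hq : 0 ≤ qbin x ((m - j) + r - 1) (m - j) := qbin_nonneg hx0 hx1.le _ _
        have hp : (0:ℝ) ≤ 1 - x ^ (n - r) := (one_sub_pow_pos hx0 hx1 _ hc1).le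
        have hpr : (0:ℝ) ≤ ∏ i ∈ Finset.Icc (n - r + 1) n, (1 - x ^ i) :=
          Finset.prod_nonneg fun i hi =>
            (one_sub_pow_pos hx0 hx1 i (by exact le_trans (by omega) (Finset.mem_Icc.mp hi).1)).le
        positivity
      congr 1
      -- real algebra
      have hPP : (∏ i ∈ Finset.Icc (n - r) n, (1 - x ^ i))
          = (1 - x ^ (n - r)) * ∏ i ∈ Finset.Icc (n - r + 1) n, (1 - x ^ i) := by
        rw [Finset.Icc_eq_cons_Ioc hcn, Finset.prod_cons, hIoc]
      have hstep : ∀ j ∈ Finset.range (m + 1),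
          (x ^ ((n - r) * j) * (1 - x ^ (n - r)))
            * ((∏ i ∈ Finset.Icc (n - r + 1) n, (1 - x ^ i))
              * (x ^ ((n - r + 1) * (m - j)) * qbin x ((m - j) + r - 1) (m - j)))
          = ((1 - x ^ (n - r)) * (∏ i ∈ Finset.Icc (n - r + 1) n, (1 - x ^ i))
              * x ^ ((n - r) * m))
            * (x ^ (m - j) * qbin x ((m - j) + r - 1) (m - j)) := by
        intro j hj
        have hjm : j ≤ m := by
          have := Finset.mem_range.mp hj; omega
        have hxe : x ^ ((n - r) * j) * x ^ ((n - r + 1) * (m - j))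
            = x ^ ((n - r) * m) * x ^ (m - j) := by
          rw [← pow_add, ← pow_add]
          congr 1
          obtain ⟨d, rfl⟩ : ∃ d, m = j + d := ⟨m - j, by omega⟩
          have hd : j + d - j = d := by omega
          rw [hd]
          ring
        calc (x ^ ((n - r) * j) * (1 - x ^ (n - r)))
              * ((∏ i ∈ Finset.Icc (n - r + 1) n, (1 - x ^ i))
                * (x ^ ((n - r + 1) * (m - j)) * qbin x ((m - j) + r - 1) (m - j)))
            = (x ^ ((n - r) * j) * x ^ ((n - r + 1) * (m - j)))
              * ((1 - x ^ (n - r)) * (∏ i ∈ Finset.Icc (n - r + 1) n, (1 - x ^ i))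
                * qbin x ((m - j) + r - 1) (m - j)) := by ring
          _ = (x ^ ((n - r) * m) * x ^ (m - j))
              * ((1 - x ^ (n - r)) * (∏ i ∈ Finset.Icc (n - r + 1) n, (1 - x ^ i))
                * qbin x ((m - j) + r - 1) (m - j)) := by rw [hxe]
          _ = ((1 - x ^ (n - r)) * (∏ i ∈ Finset.Icc (n - r + 1) n, (1 - x ^ i))
                * x ^ ((n - r) * m))
              * (x ^ (m - j) * qbin x ((m - j) + r - 1) (m - j)) := by ring
      rw [Finset.sum_congr rfl hstep, ← Finset.mul_sum]
      have hrefl : (∑ j ∈ Finset.range (m + 1),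
            x ^ (m - j) * qbin x ((m - j) + r - 1) (m - j))
          = ∑ i ∈ Finset.range (m + 1), x ^ i * qbin x (i + r - 1) i := by
        have h := Finset.sum_range_reflect (fun i => x ^ i * qbin x (i + r - 1) i) (m + 1)
        simpa using h
      rw [hrefl, qbin_hockey hx0 hx1 r m, hPP]
      have : m + (r + 1) - 1 = m + r := by omega
      rw [this]
      ring

end Prob

section Countdown
open Finset

variable {Ω : Type*} [MeasurableSpace Ω] {P : Measure Ω} [IsProbabilityMeasure P]
  {x : ℝ} {Z : ℕ → Ω → ℕ}

lemma cd_upward (Z : ℕ → Ω → ℕ) (n t : ℕ) (ω : Ω) :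
    ∀ k₁ k₂ : ℕ, k₁ ≤ k₂
      → k₁ ∈ {k : ℕ | ((∑ i ∈ Finset.Icc (k + 1) n, Z i ω : ℕ) : ℤ) ≤ (t : ℤ) + k}
      → k₂ ∈ {k : ℕ | ((∑ i ∈ Finset.Icc (k + 1) n, Z i ω : ℕ) : ℤ) ≤ (t : ℤ) + k} := by
  intro k₁ k₂ hk h
  simp only [Set.mem_setOf_eq] at *
  have hsub : (∑ i ∈ Finset.Icc (k₂ + 1) n, Z i ω) ≤ ∑ i ∈ Finset.Icc (k₁ + 1) n, Z i ω :=
    Finset.sum_le_sum_of_subset (Finset.Icc_subset_Icc (by omega) le_rfl)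
  omega

lemma cd_nonempty (Z : ℕ → Ω → ℕ) (n t : ℕ) (ω : Ω) :
    n ∈ {k : ℕ | ((∑ i ∈ Finset.Icc (k + 1) n, Z i ω : ℕ) : ℤ) ≤ (t : ℤ) + k} := by
  simp only [Set.mem_setOf_eq]
  rw [Finset.Icc_eq_empty (by omega)]
  simp
  omega

lemma cd_mem_iff (Z : ℕ → Ω → ℕ) (n t : ℕ) (ω : Ω) (k : ℕ) :
    k ∈ {k : ℕ | ((∑ i ∈ Finset.Icc (k + 1) n, Z i ω : ℕ) : ℤ) ≤ (t : ℤ) + k}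
      ↔ (∑ i ∈ Finset.Icc (k + 1) n, Z i ω) ≤ t + k := by
  simp only [Set.mem_setOf_eq]
  omega

lemma cd_zero_set (Z : ℕ → Ω → ℕ) (n t : ℕ) :
    {ω : Ω | countdown Z n (t : ℤ) ω = 0} = {ω : Ω | (∑ i ∈ Finset.Icc 1 n, Z i ω) ≤ t} := by
  have h01 : Finset.Icc (0 + 1) n = Finset.Icc 1 n := by norm_num
  ext ω
  simp only [Set.mem_setOf_eq, countdown, Nat.sInf_eq_zero]
  rw [h01]
  constructor
  · rintro (h | h)
    · omega
    · exact absurd h (Set.nonempty_iff_ne_empty.mp ⟨n, cd_nonempty Z n t ω⟩)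
  · intro h
    left
    omega

lemma cd_succ_set (Z : ℕ → Ω → ℕ) (n t : ℕ) (k : ℕ) :
    {ω : Ω | countdown Z n (t : ℤ) ω = k + 1}
      = {ω : Ω | (∑ i ∈ Finset.Icc (k + 2) n, Z i ω) ≤ t + (k + 1)}
        \ {ω : Ω | (∑ i ∈ Finset.Icc (k + 1) n, Z i ω) ≤ t + k} := by
  have h12 : Finset.Icc (k + 1 + 1) n = Finset.Icc (k + 2) n := by norm_num
  ext ω
  simp only [Set.mem_setOf_eq, countdown, Set.mem_diff,
    Nat.sInf_upward_closed_eq_succ_iff (cd_upward Z n t ω) k]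
  rw [h12]
  omega

lemma cd_le_n (Z : ℕ → Ω → ℕ) (n t : ℕ) (ω : Ω) : countdown Z n (t : ℤ) ω ≤ n :=
  Nat.sInf_le (cd_nonempty Z n t ω)

lemma measure_le_decomp (g : Ω → ℕ) (hg : Measurable g) (M : ℕ) :
    P {ω | g ω ≤ M} = ∑ m ∈ Finset.range (M + 1), P (g ⁻¹' {m}) := by
  have hev : {ω | g ω ≤ M} = ⋃ m ∈ Finset.range (M + 1), g ⁻¹' {m} := by
    ext ω
    simp only [Set.mem_setOf_eq, Set.mem_iUnion, Set.mem_preimage, Set.mem_singleton_iff,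
      Finset.mem_range]
    constructor
    · intro h; exact ⟨g ω, by omega, rfl⟩
    · rintro ⟨m, hm, rfl⟩; omega
  rw [hev, measure_biUnion_finset ?hd ?hm]
  case hd =>
    intro a _ b _ hab
    simp only [Function.onFun]
    rw [Set.disjoint_left]
    rintro ω h1 h2
    simp only [Set.mem_preimage, Set.mem_singleton_iff] at h1 h2
    exact hab (h1 ▸ h2 ▸ rfl)
  case hm =>
    intro m _
    exact hg (measurableSet_singleton m)

end Countdown

section CountdownPmf
open Finset

variable {Ω : Type*} [MeasurableSpace Ω] {P : Measure Ω} [IsProbabilityMeasure P]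
  {x : ℝ} {Z : ℕ → Ω → ℕ}

lemma countdown_pmf_zero (hx0 : 0 < x) (hx1 : x < 1) (hmeas : ∀ i, Measurable (Z i))
    (hindep : iIndepFun Z P)
    (hgeom : ∀ i, 1 ≤ i → ∀ k : ℕ, P {ω | k ≤ Z i ω} = ENNReal.ofReal (x ^ (i * k)))
    (n t : ℕ) :
    P {ω : Ω | countdown Z n (t : ℤ) ω = 0}
      = ENNReal.ofReal (∏ i ∈ Finset.Icc (t + 1) (n + t), (1 - x ^ i)) := by
  rw [cd_zero_set]
  have hg : Measurable (fun ω : Ω => ∑ i ∈ Finset.Icc 1 n, Z i ω) :=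
    Finset.measurable_sum _ (fun i _ => hmeas i)
  rw [measure_le_decomp (P := P) _ hg t]
  have hpm : ∀ m ∈ Finset.range (t + 1),
      P ((fun ω : Ω => ∑ i ∈ Finset.Icc 1 n, Z i ω) ⁻¹' {m})
        = ENNReal.ofReal ((∏ i ∈ Finset.Icc 1 n, (1 - x ^ i)) * (x ^ m * qbin x (m + n - 1) m)) := by
    intro m _
    have h := sumZ_pmf hx0 hx1 hmeas hindep hgeom n n le_rfl m
    have e : n - n + 1 = 1 := by omega
    rw [e, one_mul] at h
    exact h
  rw [Finset.sum_congr rfl hpm, ← ENNReal.ofReal_sum_of_nonneg ?hnn]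
  case hnn =>
    intro m _
    have h1 : (0:ℝ) ≤ ∏ i ∈ Finset.Icc 1 n, (1 - x ^ i) :=
      Finset.prod_nonneg fun i hi => (one_sub_pow_pos hx0 hx1 i (Finset.mem_Icc.mp hi).1).le
    have h2 : 0 ≤ qbin x (m + n - 1) m := qbin_nonneg hx0 hx1.le _ _
    positivity
  congr 1
  rw [← Finset.mul_sum, qbin_hockey hx0 hx1 n t]
  -- remaining: (∏_{Icc 1 n}) * qbin x (t+n) t = ∏_{Icc (t+1) (n+t)}
  have hq : qbin x (t + n) t = DP x (t + n) / (DP x t * DP x n) := by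
    have e : t + n - t = n := by omega
    rw [qbin_of_le (by omega : t ≤ t + n), e]
  have hIoc1 : ∀ m : ℕ, DP x m = ∏ i ∈ Finset.Ioc 0 m, (1 - x ^ i) := by
    intro m
    rw [DP, ← Finset.Icc_add_one_left_eq_Ioc]
    rfl
  have hsplitP : DP x t * (∏ i ∈ Finset.Icc (t + 1) (n + t), (1 - x ^ i)) = DP x (n + t) := by
    rw [hIoc1, hIoc1, Finset.Icc_add_one_left_eq_Ioc]
    exact Finset.prod_Ioc_consecutive _ (Nat.zero_le t) (by omega)
  have hDP1 : DP x n = ∏ i ∈ Finset.Icc 1 n, (1 - x ^ i) := rfl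
  rw [← hDP1, hq]
  have htn : t + n = n + t := by omega
  rw [htn, ← hsplitP]
  field_simp [DP_ne hx0 hx1]

lemma countdown_pmf_succ (hx0 : 0 < x) (hx1 : x < 1) (hmeas : ∀ i, Measurable (Z i))
    (hindep : iIndepFun Z P)
    (hgeom : ∀ i, 1 ≤ i → ∀ k : ℕ, P {ω | k ≤ Z i ω} = ENNReal.ofReal (x ^ (i * k)))
    (n t k : ℕ) (hk : k + 1 ≤ n) :
    P {ω : Ω | countdown Z n (t : ℤ) ω = k + 1}
      = ENNReal.ofReal (x ^ ((k + 1) * (t + k + 1))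
          * ((∏ i ∈ Finset.Icc (k + 2) n, (1 - x ^ i)) * qbin x (n + t) (t + k + 1))) := by
  rw [cd_succ_set]
  have hIoc : Finset.Icc (k + 2) n = Finset.Ioc (k + 1) n := by
    rw [← Finset.Icc_add_one_left_eq_Ioc]
    rfl
  have hsplit : ∀ ω, (∑ i ∈ Finset.Icc (k + 1) n, Z i ω)
      = Z (k + 1) ω + ∑ i ∈ Finset.Icc (k + 2) n, Z i ω := by
    intro ω
    rw [Finset.Icc_eq_cons_Ioc hk, Finset.sum_cons, hIoc]
  have hev : ({ω : Ω | (∑ i ∈ Finset.Icc (k + 2) n, Z i ω) ≤ t + (k + 1)}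
        \ {ω : Ω | (∑ i ∈ Finset.Icc (k + 1) n, Z i ω) ≤ t + k})
      = ⋃ m ∈ Finset.range (t + k + 2),
          (((fun ω : Ω => ∑ i ∈ Finset.Icc (k + 2) n, Z i ω) ⁻¹' {m})
            ∩ (Z (k + 1) ⁻¹' Set.Ici (t + k + 1 - m))) := by
    ext ω
    simp only [Set.mem_diff, Set.mem_setOf_eq, Set.mem_iUnion, Set.mem_preimage,
      Set.mem_singleton_iff, Set.mem_inter_iff, Set.mem_Ici, Finset.mem_range, hsplit ω]
    constructor
    · rintro ⟨h1, h2⟩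
      exact ⟨_, by omega, rfl, by omega⟩
    · rintro ⟨m, hm, h1, h2⟩
      omega
  rw [hev, measure_biUnion_finset ?hd ?hm]
  case hd =>
    intro a _ b _ hab
    simp only [Function.onFun]
    rw [Set.disjoint_left]
    rintro ω ⟨h1, -⟩ ⟨h2, -⟩
    simp only [Set.mem_preimage, Set.mem_singleton_iff] at h1 h2
    exact hab (h1 ▸ h2 ▸ rfl)
  case hm =>
    intro m _
    exact ((Finset.measurable_sum _ (fun i _ => hmeas i)) (measurableSet_singleton m)).inter
      ((hmeas (k + 1)) measurableSet_Ici)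
  have hind : IndepFun (fun ω : Ω => ∑ i ∈ Finset.Icc (k + 2) n, Z i ω) (Z (k + 1)) P := by
    have h0 := hindep.indepFun_finsetSum_of_notMem hmeas
      (s := Finset.Icc (k + 2) n) (i := k + 1) (by simp [Finset.mem_Icc])
    have heq : (∑ j ∈ Finset.Icc (k + 2) n, Z j)
        = fun ω => ∑ i ∈ Finset.Icc (k + 2) n, Z i ω := by
      funext ω; exact Finset.sum_apply ω _ Z
    rwa [heq] at h0
  have hr : n - (k + 1) ≤ n := by omega
  have he2 : n - (n - (k + 1)) + 1 = k + 2 := by omega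
  have hterm : ∀ m ∈ Finset.range (t + k + 2),
      P (((fun ω : Ω => ∑ i ∈ Finset.Icc (k + 2) n, Z i ω) ⁻¹' {m})
          ∩ (Z (k + 1) ⁻¹' Set.Ici (t + k + 1 - m)))
        = ENNReal.ofReal (((∏ i ∈ Finset.Icc (k + 2) n, (1 - x ^ i))
            * (x ^ ((k + 2) * m) * qbin x (m + (n - (k + 1)) - 1) m))
          * x ^ ((k + 1) * (t + k + 1 - m))) := by
    intro m _
    rw [hind.measure_inter_preimage_eq_mul _ _ (measurableSet_singleton m) measurableSet_Ici]
    have hS : P ((fun ω : Ω => ∑ i ∈ Finset.Icc (k + 2) n, Z i ω) ⁻¹' {m})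
        = ENNReal.ofReal ((∏ i ∈ Finset.Icc (k + 2) n, (1 - x ^ i))
            * (x ^ ((k + 2) * m) * qbin x (m + (n - (k + 1)) - 1) m)) := by
      have h := sumZ_pmf hx0 hx1 hmeas hindep hgeom n (n - (k + 1)) hr m
      rw [he2] at h
      exact h
    have hZ : P (Z (k + 1) ⁻¹' Set.Ici (t + k + 1 - m))
        = ENNReal.ofReal (x ^ ((k + 1) * (t + k + 1 - m))) :=
      hgeom (k + 1) (by omega) (t + k + 1 - m)
    rw [hS, hZ, ← ENNReal.ofReal_mul ?_]
    have h1 : (0:ℝ) ≤ ∏ i ∈ Finset.Icc (k + 2) n, (1 - x ^ i) :=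
      Finset.prod_nonneg fun i hi => (one_sub_pow_pos hx0 hx1 i (by
        have := (Finset.mem_Icc.mp hi).1; omega)).le
    have h2 : 0 ≤ qbin x (m + (n - (k + 1)) - 1) m := qbin_nonneg hx0 hx1.le _ _
    positivity
  rw [Finset.sum_congr rfl hterm, ← ENNReal.ofReal_sum_of_nonneg ?hnn]
  case hnn =>
    intro m _
    have h1 : (0:ℝ) ≤ ∏ i ∈ Finset.Icc (k + 2) n, (1 - x ^ i) :=
      Finset.prod_nonneg fun i hi => (one_sub_pow_pos hx0 hx1 i (by
        have := (Finset.mem_Icc.mp hi).1; omega)).le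
    have h2 : 0 ≤ qbin x (m + (n - (k + 1)) - 1) m := qbin_nonneg hx0 hx1.le _ _
    positivity
  congr 1
  have hstep : ∀ m ∈ Finset.range (t + k + 2),
      ((∏ i ∈ Finset.Icc (k + 2) n, (1 - x ^ i))
          * (x ^ ((k + 2) * m) * qbin x (m + (n - (k + 1)) - 1) m))
        * x ^ ((k + 1) * (t + k + 1 - m))
      = ((∏ i ∈ Finset.Icc (k + 2) n, (1 - x ^ i)) * x ^ ((k + 1) * (t + k + 1)))
        * (x ^ m * qbin x (m + (n - (k + 1)) - 1) m) := by
    intro m hm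
    have hmle : m ≤ t + k + 1 := by
      have := Finset.mem_range.mp hm; omega
    have hxe : x ^ ((k + 2) * m) * x ^ ((k + 1) * (t + k + 1 - m))
        = x ^ ((k + 1) * (t + k + 1)) * x ^ m := by
      rw [← pow_add, ← pow_add]
      congr 1
      obtain ⟨d, hd⟩ : ∃ d, t + k + 1 = m + d := ⟨t + k + 1 - m, by omega⟩
      rw [hd]
      have h3 : m + d - m = d := by omega
      rw [h3]
      ring
    calc ((∏ i ∈ Finset.Icc (k + 2) n, (1 - x ^ i))
          * (x ^ ((k + 2) * m) * qbin x (m + (n - (k + 1)) - 1) m))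
        * x ^ ((k + 1) * (t + k + 1 - m))
        = (x ^ ((k + 2) * m) * x ^ ((k + 1) * (t + k + 1 - m)))
          * ((∏ i ∈ Finset.Icc (k + 2) n, (1 - x ^ i)) * qbin x (m + (n - (k + 1)) - 1) m) := by
          ring
      _ = (x ^ ((k + 1) * (t + k + 1)) * x ^ m)
          * ((∏ i ∈ Finset.Icc (k + 2) n, (1 - x ^ i)) * qbin x (m + (n - (k + 1)) - 1) m) := by
          rw [hxe]
      _ = ((∏ i ∈ Finset.Icc (k + 2) n, (1 - x ^ i)) * x ^ ((k + 1) * (t + k + 1)))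
        * (x ^ m * qbin x (m + (n - (k + 1)) - 1) m) := by ring
  rw [Finset.sum_congr rfl hstep, ← Finset.mul_sum]
  have hhk : (t + k + 2) = (t + k + 1) + 1 := by omega
  rw [hhk, qbin_hockey hx0 hx1 (n - (k + 1)) (t + k + 1)]
  have he3 : t + k + 1 + (n - (k + 1)) = n + t := by omega
  rw [he3]
  ring

end CountdownPmf

section Compare
open Finset

variable {x : ℝ}

lemma Icc_prod_nonneg (hx0 : 0 < x) (hx1 : x < 1) (a b : ℕ) (ha : 1 ≤ a) :
    0 ≤ ∏ i ∈ Finset.Icc a b, (1 - x ^ i) :=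
  Finset.prod_nonneg fun i hi => (one_sub_pow_pos hx0 hx1 i
    (le_trans ha (Finset.mem_Icc.mp hi).1)).le

lemma DP_split (hx0 : 0 < x) (hx1 : x < 1) (t m : ℕ) (h : t ≤ m) :
    DP x t * (∏ i ∈ Finset.Icc (t + 1) m, (1 - x ^ i)) = DP x m := by
  have hIoc1 : ∀ r : ℕ, DP x r = ∏ i ∈ Finset.Ioc 0 r, (1 - x ^ i) := by
    intro r
    rw [DP, ← Finset.Icc_add_one_left_eq_Ioc]
    rfl
  rw [hIoc1, hIoc1, Finset.Icc_add_one_left_eq_Ioc]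
  exact Finset.prod_Ioc_consecutive _ (Nat.zero_le t) h

lemma DP_as_range (hx0 : 0 < x) (hx1 : x < 1) (m : ℕ) :
    DP x m = ∏ i ∈ Finset.range m, (1 - x ^ (1 + i)) := by
  rw [DP, ← Finset.Ico_add_one_right_eq_Icc, Finset.prod_Ico_eq_prod_range,
    show m + 1 - 1 = m from by omega]

lemma tprod_tail_ge (hx0 : 0 < x) (hx1 : x < 1) (hx2 : x ≤ 1 / 2) (n : ℕ) :
    1 - x ^ n ≤ ∏' i : ℕ, (1 - x ^ (n + 1 + i)) := by
  have h1 := tprod_geom_ge hx0 hx1 hx2 (n + 1)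
  have h2 : x ^ (n + 1) = x ^ n * x := pow_succ x n
  have h3 : (0:ℝ) ≤ x ^ n := by positivity
  nlinarith

lemma mid_prod_le (hx0 : 0 < x) (hx1 : x < 1) (a b n : ℕ) (ha : a < n) (hb : n ≤ b) :
    (∏ i ∈ Finset.Ioc a b, (1 - x ^ i)) ≤ 1 - x ^ n := by
  have hn_in : n ∈ Finset.Ioc a b := Finset.mem_Ioc.mpr ⟨ha, hb⟩
  rw [← Finset.mul_prod_erase _ _ hn_in]
  have hrest_nonneg : (0:ℝ) ≤ ∏ i ∈ (Finset.Ioc a b).erase n, (1 - x ^ i) :=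
    Finset.prod_nonneg fun i hi => by
      have := Finset.mem_Ioc.mp (Finset.mem_of_mem_erase hi)
      exact (one_sub_pow_pos hx0 hx1 i (by omega)).le
  have hrest_le : (∏ i ∈ (Finset.Ioc a b).erase n, (1 - x ^ i)) ≤ 1 :=
    Finset.prod_le_one (fun i hi => by
      have := Finset.mem_Ioc.mp (Finset.mem_of_mem_erase hi)
      exact (one_sub_pow_pos hx0 hx1 i (by omega)).le)
      (fun i _ => by
        have : (0:ℝ) ≤ x ^ i := by positivity
        linarith)
  have hpos : (0:ℝ) ≤ 1 - x ^ n := (one_sub_pow_pos hx0 hx1 n (by omega)).le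
  nlinarith

lemma compare_real (hx0 : 0 < x) (hx2 : x ≤ 1 / 2) (n t k : ℕ) (hk : k + 1 ≤ n) :
    x ^ ((k + 1) * (t + k + 1))
        * ((∏ i ∈ Finset.Icc (k + 2) n, (1 - x ^ i)) * qbin x (n + t) (t + k + 1))
      ≤ x ^ ((k + 1) * (t + (k + 1))) * (∏' i : ℕ, (1 - x ^ (k + 1 + 1 + i)))
          / ∏ i ∈ Finset.Icc 1 (t + (k + 1)), (1 - x ^ i) := by
  have hx1 : x < 1 := lt_of_le_of_lt hx2 (by norm_num)
  have e1 : t + (k + 1) = t + k + 1 := by omega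
  rw [e1]
  -- rewrite infinite product
  have e2 : (∏' i : ℕ, (1 - x ^ (k + 1 + 1 + i))) = ∏' i : ℕ, (1 - x ^ (k + 2 + i)) :=
    tprod_congr fun i => by norm_num
  rw [e2, tprod_geom_shift hx0 hx1 (k + 2) (n - k - 1)]
  have e3 : (∏' i : ℕ, (1 - x ^ (k + 2 + (n - k - 1) + i)))
      = ∏' i : ℕ, (1 - x ^ (n + 1 + i)) :=
    tprod_congr fun i => by rw [show k + 2 + (n - k - 1) + i = n + 1 + i by omega]
  rw [e3]
  have e4 : (∏ i ∈ Finset.range (n - k - 1), (1 - x ^ (k + 2 + i)))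
      = ∏ i ∈ Finset.Icc (k + 2) n, (1 - x ^ i) := by
    rw [← Finset.Ico_add_one_right_eq_Icc, Finset.prod_Ico_eq_prod_range,
      show n + 1 - (k + 2) = n - k - 1 from by omega]
  rw [e4]
  -- unfold qbin
  have e5 : n + t - (t + k + 1) = n - (k + 1) := by omega
  rw [qbin_of_le (by omega : t + k + 1 ≤ n + t), e5]
  -- fold DP for the denominator
  have hDPfold : (∏ i ∈ Finset.Icc 1 (t + k + 1), (1 - x ^ i)) = DP x (t + k + 1) := rfl
  rw [hDPfold]
  -- key inequality
  have hkey : DP x (n + t) / DP x (n - (k + 1)) ≤ ∏' i : ℕ, (1 - x ^ (n + 1 + i)) := by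
    have hsplit : DP x (n - (k + 1)) * (∏ i ∈ Finset.Icc (n - (k + 1) + 1) (n + t), (1 - x ^ i))
        = DP x (n + t) := DP_split hx0 hx1 _ _ (by omega)
    have hIoc : Finset.Icc (n - (k + 1) + 1) (n + t) = Finset.Ioc (n - (k + 1)) (n + t) :=
      Finset.Icc_add_one_left_eq_Ioc _ _
    have hdiv : DP x (n + t) / DP x (n - (k + 1))
        = ∏ i ∈ Finset.Ioc (n - (k + 1)) (n + t), (1 - x ^ i) := by
      rw [← hsplit, hIoc]
      field_simp [DP_ne hx0 hx1]
    rw [hdiv]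
    calc (∏ i ∈ Finset.Ioc (n - (k + 1)) (n + t), (1 - x ^ i))
        ≤ 1 - x ^ n := mid_prod_le hx0 hx1 _ _ n (by omega) (by omega)
      _ ≤ ∏' i : ℕ, (1 - x ^ (n + 1 + i)) := tprod_tail_ge hx0 hx1 hx2 n
  -- multiply by the nonnegative coefficient
  have hPk : (0:ℝ) ≤ ∏ i ∈ Finset.Icc (k + 2) n, (1 - x ^ i) :=
    Icc_prod_nonneg hx0 hx1 _ _ (by omega)
  have hco : (0:ℝ) ≤ x ^ ((k + 1) * (t + k + 1))
      * (∏ i ∈ Finset.Icc (k + 2) n, (1 - x ^ i)) / DP x (t + k + 1) := by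
    have := DP_pos hx0 hx1 (t + k + 1)
    positivity
  have hL : x ^ ((k + 1) * (t + k + 1))
      * ((∏ i ∈ Finset.Icc (k + 2) n, (1 - x ^ i))
        * (DP x (n + t) / (DP x (t + k + 1) * DP x (n - (k + 1)))))
      = (x ^ ((k + 1) * (t + k + 1))
          * (∏ i ∈ Finset.Icc (k + 2) n, (1 - x ^ i)) / DP x (t + k + 1))
        * (DP x (n + t) / DP x (n - (k + 1))) := by
    field_simp
  have hR : x ^ ((k + 1) * (t + k + 1))
      * ((∏ i ∈ Finset.Icc (k + 2) n, (1 - x ^ i)) * ∏' i : ℕ, (1 - x ^ (n + 1 + i)))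
      / DP x (t + k + 1)
      = (x ^ ((k + 1) * (t + k + 1))
          * (∏ i ∈ Finset.Icc (k + 2) n, (1 - x ^ i)) / DP x (t + k + 1))
        * (∏' i : ℕ, (1 - x ^ (n + 1 + i))) := by
    field_simp
  rw [hL, hR]
  exact mul_le_mul_of_nonneg_left hkey hco

lemma p0_eq (hx0 : 0 < x) (hx1 : x < 1) (n t : ℕ) :
    x ^ (0 * (t + 0)) * (∏' i : ℕ, (1 - x ^ (0 + 1 + i)))
        / ∏ i ∈ Finset.Icc 1 (t + 0), (1 - x ^ i)
      = (∏ i ∈ Finset.Icc (t + 1) (n + t), (1 - x ^ i))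
          * ∏' i : ℕ, (1 - x ^ (n + t + 1 + i)) := by
  have e0 : (0 : ℕ) * (t + 0) = 0 := by omega
  rw [e0, pow_zero, one_mul]
  have e1 : (∏' i : ℕ, (1 - x ^ (0 + 1 + i))) = ∏' i : ℕ, (1 - x ^ (1 + i)) :=
    tprod_congr fun i => by norm_num
  rw [e1, tprod_geom_shift hx0 hx1 1 (n + t)]
  have e2 : (∏' i : ℕ, (1 - x ^ (1 + (n + t) + i))) = ∏' i : ℕ, (1 - x ^ (n + t + 1 + i)) :=
    tprod_congr fun i => by rw [show 1 + (n + t) + i = n + t + 1 + i by omega]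
  rw [e2]
  have e3 : (∏ i ∈ Finset.range (n + t), (1 - x ^ (1 + i))) = DP x (n + t) :=
    (DP_as_range hx0 hx1 (n + t)).symm
  rw [e3]
  have e4 : t + 0 = t := by omega
  rw [e4]
  have hfold : (∏ i ∈ Finset.Icc 1 t, (1 - x ^ i)) = DP x t := rfl
  rw [hfold]
  have hsplit := DP_split hx0 hx1 t (n + t) (by omega)
  rw [← hsplit]
  have h1 := DP_ne hx0 hx1 t
  field_simp

end Compare

lemma pmf_decomp {Ω : Type*} [MeasurableSpace Ω] (P : Measure Ω) (Y : Ω → ℕ)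
    (hY : ∀ k, MeasurableSet {ω | Y ω = k}) (B : Set ℕ) :
    P {ω | Y ω ∈ B} = ∑' k : B, P {ω | Y ω = (k : ℕ)} := by
  have hev : {ω | Y ω ∈ B} = ⋃ k ∈ B, {ω | Y ω = k} := by
    ext ω; simp
  rw [hev, measure_biUnion B.to_countable ?hd (fun b _ => hY b)]
  case hd =>
    intro a _ b _ hab
    simp only [Function.onFun]
    rw [Set.disjoint_left]
    intro ω h1 h2
    simp only [Set.mem_setOf_eq] at h1 h2
    exact hab (h1 ▸ h2 ▸ rfl)

theorem dTV_countdown_marginal {Ω : Type*} [MeasurableSpace Ω] (P : Measure Ω)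
    [IsProbabilityMeasure P] (x : ℝ) (hx0 : 0 < x) (hx2 : x ≤ 1 / 2)
    (Z : ℕ → Ω → ℕ) (hmeas : ∀ i, Measurable (Z i))
    (hindep : iIndepFun Z P)
    (hgeom : ∀ i, 1 ≤ i → ∀ k : ℕ, P {ω | k ≤ Z i ω} = ENNReal.ofReal (x ^ (i * k)))
    (t n : ℕ) (hn : 1 ≤ n)
    (X : Ω → ℕ) (hXmeas : Measurable X)
    (hX : ∀ k : ℕ, P {ω | X ω = k}
      = ENNReal.ofReal (x ^ (k * (t + k)) * (∏' i : ℕ, (1 - x ^ (k + 1 + i)))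
          / ∏ i ∈ Finset.Icc 1 (t + k), (1 - x ^ i))) :
    (⨆ B : Set ℕ, |(P {ω | X ω ∈ B}).toReal
        - (P {ω | countdown Z n t ω ∈ B}).toReal|)
      = (∏ i ∈ Finset.Icc (t + 1) (n + t), (1 - x ^ i))
          * (1 - ∏' i : ℕ, (1 - x ^ (n + t + 1 + i)))
    ∧ (⨆ B : Set ℕ, |(P {ω | X ω ∈ B}).toReal
        - (P {ω | countdown Z n t ω ∈ B}).toReal|)
      = (P {ω | countdown Z n t ω = 0}).toReal - (P {ω | X ω = 0}).toReal := by
  have hx1 : x < 1 := lt_of_le_of_lt hx2 (by norm_num)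
  -- measurability
  have hsumMeas : ∀ a : ℕ, Measurable (fun ω : Ω => ∑ i ∈ Finset.Icc a n, Z i ω) :=
    fun a => Finset.measurable_sum _ (fun i _ => hmeas i)
  have hcdMeas : ∀ k : ℕ, MeasurableSet {ω | countdown Z n (t : ℤ) ω = k} := by
    intro k
    cases k with
    | zero =>
        rw [cd_zero_set]
        exact (hsumMeas 1) measurableSet_Iic
    | succ k =>
        rw [cd_succ_set]
        exact ((hsumMeas (k + 2)) measurableSet_Iic).diff ((hsumMeas (k + 1)) measurableSet_Iic)
  have hXMeasSet : ∀ k : ℕ, MeasurableSet {ω | X ω = k} :=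
    fun k => hXmeas (measurableSet_singleton k)
  -- value of q at 0
  have hq0 : (P {ω | countdown Z n (t : ℤ) ω = 0}).toReal
      = ∏ i ∈ Finset.Icc (t + 1) (n + t), (1 - x ^ i) := by
    rw [countdown_pmf_zero hx0 hx1 hmeas hindep hgeom n t,
      ENNReal.toReal_ofReal (Icc_prod_nonneg hx0 hx1 _ _ (by omega))]
  -- value of p at 0
  have hp0 : (P {ω | X ω = 0}).toReal
      = (∏ i ∈ Finset.Icc (t + 1) (n + t), (1 - x ^ i))
          * ∏' i : ℕ, (1 - x ^ (n + t + 1 + i)) := by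
    rw [hX 0, ENNReal.toReal_ofReal ?hnn, p0_eq hx0 hx1 n t]
    case hnn =>
      have h1 : (0:ℝ) ≤ ∏' i : ℕ, (1 - x ^ (0 + 1 + i)) := tprod_geom_nonneg hx0 hx1 (0 + 1)
      have h2 : (0:ℝ) < ∏ i ∈ Finset.Icc 1 (t + 0), (1 - x ^ i) := DP_pos hx0 hx1 (t + 0)
      positivity
  set Δr : ℝ := (∏ i ∈ Finset.Icc (t + 1) (n + t), (1 - x ^ i))
      * (1 - ∏' i : ℕ, (1 - x ^ (n + t + 1 + i))) with hΔr_def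
  have hΔeq : (P {ω | countdown Z n (t : ℤ) ω = 0}).toReal - (P {ω | X ω = 0}).toReal = Δr := by
    rw [hq0, hp0, hΔr_def]; ring
  have hΔnn : 0 ≤ Δr := by
    rw [hΔr_def]
    have h1 : (∏' i : ℕ, (1 - x ^ (n + t + 1 + i))) ≤ 1 := tprod_geom_le_one hx0 hx1 (n + t + 1)
    have h2 : (0:ℝ) ≤ ∏ i ∈ Finset.Icc (t + 1) (n + t), (1 - x ^ i) :=
      Icc_prod_nonneg hx0 hx1 _ _ (by omega)
    nlinarith
  -- comparison for k ≥ 1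
  have hcomp : ∀ k : ℕ, (P {ω | countdown Z n (t : ℤ) ω = k + 1}).toReal
      ≤ (P {ω | X ω = k + 1}).toReal := by
    intro k
    by_cases hk : k + 1 ≤ n
    · rw [countdown_pmf_succ hx0 hx1 hmeas hindep hgeom n t k hk, hX (k + 1),
        ENNReal.toReal_ofReal ?h1, ENNReal.toReal_ofReal ?h2]
      case h1 =>
        have ha : (0:ℝ) ≤ ∏ i ∈ Finset.Icc (k + 2) n, (1 - x ^ i) :=
          Icc_prod_nonneg hx0 hx1 _ _ (by omega)
        have hb : 0 ≤ qbin x (n + t) (t + k + 1) := qbin_nonneg hx0 hx1.le _ _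
        positivity
      case h2 =>
        have ha : (0:ℝ) ≤ ∏' i : ℕ, (1 - x ^ (k + 1 + 1 + i)) :=
          tprod_geom_nonneg hx0 hx1 (k + 1 + 1)
        have hb : (0:ℝ) < ∏ i ∈ Finset.Icc 1 (t + (k + 1)), (1 - x ^ i) :=
          DP_pos hx0 hx1 (t + (k + 1))
        positivity
      exact compare_real hx0 hx2 n t k hk
    · have hempty : {ω | countdown Z n (t : ℤ) ω = k + 1} = (∅ : Set Ω) := by
        ext ω
        simp only [Set.mem_setOf_eq, Set.mem_empty_iff_false, iff_false]
        intro heq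
        have := cd_le_n Z n t ω
        omega
      rw [hempty]
      simp
  -- totals
  have hqsum_top : (∑' k : ℕ, P {ω | countdown Z n (t : ℤ) ω = k}) = 1 := by
    have h := pmf_decomp P (countdown Z n (t : ℤ)) hcdMeas Set.univ
    simp only [Set.mem_univ, Set.setOf_true] at h
    rw [measure_univ] at h
    rw [← tsum_univ (fun k : ℕ => P {ω | countdown Z n (t : ℤ) ω = k}), ← h]
  have hpsum_top : (∑' k : ℕ, P {ω | X ω = k}) = 1 := by
    have h := pmf_decomp P X hXMeasSet Set.univ
    simp only [Set.mem_univ, Set.setOf_true] at h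
    rw [measure_univ] at h
    rw [← tsum_univ (fun k : ℕ => P {ω | X ω = k}), ← h]
  have hqr_sum : Summable (fun k : ℕ => (P {ω | countdown Z n (t : ℤ) ω = k}).toReal) :=
    ENNReal.summable_toReal (by rw [hqsum_top]; exact ENNReal.one_ne_top)
  have hpr_sum : Summable (fun k : ℕ => (P {ω | X ω = k}).toReal) :=
    ENNReal.summable_toReal (by rw [hpsum_top]; exact ENNReal.one_ne_top)
  have hpr_total : (∑' k : ℕ, (P {ω | X ω = k}).toReal) = 1 := by
    rw [← ENNReal.tsum_toReal_eq (fun _ => measure_ne_top P _), hpsum_top, ENNReal.toReal_one]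
  have hqr_total : (∑' k : ℕ, (P {ω | countdown Z n (t : ℤ) ω = k}).toReal) = 1 := by
    rw [← ENNReal.tsum_toReal_eq (fun _ => measure_ne_top P _), hqsum_top, ENNReal.toReal_one]
  have hBX : ∀ B : Set ℕ, (P {ω | X ω ∈ B}).toReal = ∑' k : B, (P {ω | X ω = (k : ℕ)}).toReal := by
    intro B
    rw [pmf_decomp P X hXMeasSet B, ENNReal.tsum_toReal_eq (fun _ => measure_ne_top P _)]
  have hBQ : ∀ B : Set ℕ, (P {ω | countdown Z n (t : ℤ) ω ∈ B}).toReal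
      = ∑' k : B, (P {ω | countdown Z n (t : ℤ) ω = (k : ℕ)}).toReal := by
    intro B
    rw [pmf_decomp P (countdown Z n (t : ℤ)) hcdMeas B,
      ENNReal.tsum_toReal_eq (fun _ => measure_ne_top P _)]
  -- one-sided bound
  have hkey : ∀ B : Set ℕ,
      (∑' k : B, (P {ω | countdown Z n (t : ℤ) ω = (k : ℕ)}).toReal)
        - (∑' k : B, (P {ω | X ω = (k : ℕ)}).toReal) ≤ Δr := by
    intro B
    classical
    set d : ℕ → ℝ := fun k => if k = 0 then Δr else 0 with hd_def
    have hd_sum : Summable d := summable_of_ne_finset_zero (s := {0})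
      (fun b hb => by
        simp only [Finset.mem_singleton] at hb
        simp [hd_def, hb])
    have hd_nonneg : ∀ k, 0 ≤ d k := by
      intro k
      by_cases h : k = 0 <;> simp [hd_def, h, hΔnn]
    have hqle : ∀ k : ℕ, (P {ω | countdown Z n (t : ℤ) ω = k}).toReal
        ≤ (P {ω | X ω = k}).toReal + d k := by
      intro k
      cases k with
      | zero =>
          have h1 : d 0 = Δr := by simp [hd_def]
          rw [h1]
          linarith [hΔeq]
      | succ k =>
          have h1 : d (k + 1) = 0 := by simp [hd_def]
          rw [h1]
          linarith [hcomp k]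
    have hsum_pd : Summable (fun k : ℕ => (P {ω | X ω = k}).toReal + d k) := hpr_sum.add hd_sum
    have step1 : (∑' k : B, (P {ω | countdown Z n (t : ℤ) ω = (k : ℕ)}).toReal)
        ≤ ∑' k : B, ((P {ω | X ω = (k : ℕ)}).toReal + d k) :=
      Summable.tsum_le_tsum (fun k => hqle k) (hqr_sum.subtype B) (hsum_pd.subtype B)
    have step2 : (∑' k : B, ((P {ω | X ω = (k : ℕ)}).toReal + d k))
        = (∑' k : B, (P {ω | X ω = (k : ℕ)}).toReal) + ∑' k : B, d (k : ℕ) :=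
      Summable.tsum_add (hpr_sum.subtype B) (hd_sum.subtype B)
    have step3 : (∑' k : B, d (k : ℕ)) ≤ Δr := by
      have h1 : (∑' k : B, d (k : ℕ)) ≤ ∑' k : ℕ, d k :=
        Summable.tsum_le_tsum_of_inj Subtype.val Subtype.val_injective
          (fun c _ => hd_nonneg c) (fun k => le_rfl) (hd_sum.subtype B) hd_sum
      have h2 : (∑' k : ℕ, d k) = Δr := by
        rw [hd_def]
        exact tsum_ite_eq 0 (fun _ => Δr)
      linarith
    linarith
  -- reverse bound via complements
  have hrev : ∀ B : Set ℕ,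
      (∑' k : B, (P {ω | X ω = (k : ℕ)}).toReal)
        - (∑' k : B, (P {ω | countdown Z n (t : ℤ) ω = (k : ℕ)}).toReal) ≤ Δr := by
    intro B
    have hcp := Summable.tsum_add_tsum_compl (s := B) (hpr_sum.subtype B) (hpr_sum.subtype Bᶜ)
    have hcq := Summable.tsum_add_tsum_compl (s := B) (hqr_sum.subtype B) (hqr_sum.subtype Bᶜ)
    rw [hpr_total] at hcp
    rw [hqr_total] at hcq
    have := hkey Bᶜ
    linarith
  -- absolute bound
  have habs : ∀ B : Set ℕ,
      |(P {ω | X ω ∈ B}).toReal - (P {ω | countdown Z n (t : ℤ) ω ∈ B}).toReal| ≤ Δr := by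
    intro B
    rw [hBX B, hBQ B, abs_le]
    constructor
    · linarith [hkey B]
    · linarith [hrev B]
  -- the bound is attained at B = {0}
  have hset1 : {ω | X ω ∈ ({0} : Set ℕ)} = {ω | X ω = 0} := by
    ext ω; simp
  have hset2 : {ω | countdown Z n (t : ℤ) ω ∈ ({0} : Set ℕ)}
      = {ω | countdown Z n (t : ℤ) ω = 0} := by
    ext ω; simp
  have hat : |(P {ω | X ω ∈ ({0} : Set ℕ)}).toReal
      - (P {ω | countdown Z n (t : ℤ) ω ∈ ({0} : Set ℕ)}).toReal| = Δr := by
    rw [hset1, hset2, abs_sub_comm, abs_of_nonneg (by linarith [hΔeq])]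
    linarith [hΔeq]
  -- conclude
  have hsup : (⨆ B : Set ℕ, |(P {ω | X ω ∈ B}).toReal
      - (P {ω | countdown Z n (t : ℤ) ω ∈ B}).toReal|) = Δr := by
    apply le_antisymm
    · exact ciSup_le habs
    · have hbdd : BddAbove (Set.range fun B : Set ℕ =>
          |(P {ω | X ω ∈ B}).toReal - (P {ω | countdown Z n (t : ℤ) ω ∈ B}).toReal|) := by
        refine ⟨Δr, ?_⟩
        rintro y ⟨B, rfl⟩
        exact habs B
      have h := le_ciSup hbdd ({0} : Set ℕ)
      rw [hat] at h
      exact h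
  exact ⟨hsup, by rw [hsup, hΔeq]⟩
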